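/- arXiv:1706.08387 — 2 statements merged into one kernel-verified Lean document; each statement's English description precedes it below -/
import Mathlib

section
/- Let V be an abelian group with a symmetric bilinear form (·|·) on a rational vector space containing a lattice Q, let α ∈ Q with (α|α) = 2, and let c̃ : Q → ℂ satisfy (a) c̃(γ) = (γ|β) + a for some β in the vector space and a ∈ ℂ, and (b) c̃(γ) = -c̃(r_α(γ) - α) for all γ ∈ Q, where r_α(γ) = γ - (γ|α)α. If Q spans the vector space, then c̃(γ) = C·((γ|α) + 1) for all γ ∈ Q, where C = c̃(0). -/
/-- Key computation in the proof of Theorem 3.1 of Kac–Wakimoto: let `V` be a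
rational vector space with a symmetric bilinear form `B`, `Q ⊆ V` a subgroup
(lattice) spanning `V` on which the form takes integer values against `α`, and
`α ∈ Q` with `B α α = 2`.  If `c̃ : Q → ℂ` is affine-linear
(i.e. `c̃ γ = (γ|β) + a`) and satisfies the antisymmetry
`c̃ γ = −c̃ (r_α γ − α)` where `r_α γ = γ − (γ|α)α`, then
`c̃ γ = c̃ 0 · ((γ|α) + 1)` for all `γ ∈ Q`. -/
theorem affine_antisymmetric_is_proportional
    {V : Type*} [AddCommGroup V] [Module ℚ V]
    (B : V →ₗ[ℚ] V →ₗ[ℚ] ℚ) (hsymm : ∀ x y, B x y = B y x)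
    (Q : AddSubgroup V) (hspan : Submodule.span ℚ (Q : Set V) = ⊤)
    (α : V) (hα : α ∈ Q) (hαα : B α α = 2)
    (hQint : ∀ γ ∈ Q, ∃ k : ℤ, B γ α = k)
    (c : V → ℂ) (β : V) (a : ℂ)
    (haff : ∀ γ ∈ Q, c γ = (B γ β : ℂ) + a)
    (hanti : ∀ γ ∈ Q, c γ = -c (γ - (B γ α) • α - α)) :
    ∀ γ ∈ Q, c γ = c 0 * ((B γ α : ℂ) + 1) := by
  have h0 : (0 : V) ∈ Q := Q.zero_mem
  have hmem : ∀ γ ∈ Q, γ - (B γ α) • α - α ∈ Q := by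
    intro γ hγ
    obtain ⟨k, hk⟩ := hQint γ hγ
    rw [hk, Int.cast_smul_eq_zsmul]
    exact Q.sub_mem (Q.sub_mem hγ (Q.zsmul_mem hα k)) hα
  have hc0 : c 0 = a := by rw [haff 0 h0]; simp
  have main : ∀ γ ∈ Q,
      (B γ β : ℂ) + a = -(((B γ β : ℂ) - (B γ α) * (B α β) - (B α β)) + a) := by
    intro γ hγ
    have h1 := hanti γ hγ
    rw [haff γ hγ, haff _ (hmem γ hγ)] at h1
    have hB : B (γ - (B γ α) • α - α) β
        = B γ β - (B γ α) * (B α β) - (B α β) := by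
      simp [map_sub, LinearMap.sub_apply, LinearMap.smul_apply, smul_eq_mul]
    rw [hB] at h1
    push_cast at h1 ⊢
    linear_combination h1
  have key : (B α β : ℂ) = 2 * a := by
    have h := main 0 h0
    simp at h
    linear_combination -h
  intro γ hγ
  have h := main γ hγ
  rw [haff γ hγ, hc0]
  linear_combination h / 2 + ((B γ α : ℂ) + 1) / 2 * key
end

section
/- Let α be a vector with (α|α) = 2 in a real inner product space, β another vector, a ∈ ℝ, and define c̃(γ) = (γ|β) + a. If c̃(γ) = -c̃(r_α(γ) - α) for all γ in a spanning set Q closed under addition, where r_α(γ) = γ - (γ|α)α, then β = ((α|β)/2)·α and a = (α|β)/2. -/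
/-- Intermediate step in the proof of Theorem 3.1 of Kac–Wakimoto: in a real
inner product space, let `α` satisfy `⟪α,α⟫ = 2`, let `c̃ γ = ⟪γ,β⟫ + a`, and
suppose `c̃ γ = −c̃ (r_α γ − α)` for all `γ` in a spanning set `Q` closed under
addition, where `r_α γ = γ − ⟪γ,α⟫α`.  Then `β = (⟪α,β⟫/2)·α` and
`a = ⟪α,β⟫/2`. -/
theorem antisymmetry_forces_beta_and_a
    {V : Type*} [NormedAddCommGroup V] [InnerProductSpace ℝ V]
    (α β : V) (a : ℝ) (hαα : inner ℝ α α = (2 : ℝ))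
    (Q : Set V) (hspan : Submodule.span ℝ Q = ⊤)
    (hQ : Q.Nonempty) (hadd : ∀ x ∈ Q, ∀ y ∈ Q, x + y ∈ Q)
    (c : V → ℝ) (hc : ∀ γ, c γ = inner ℝ γ β + a)
    (hanti : ∀ γ ∈ Q, c γ = -c (γ - (inner ℝ γ α : ℝ) • α - α)) :
    β = ((inner ℝ α β : ℝ) / 2) • α ∧ a = (inner ℝ α β : ℝ) / 2 := by
  set v : V := (2 : ℝ) • β - (inner ℝ α β : ℝ) • α with hv
  have key : ∀ γ ∈ Q, (inner ℝ γ v : ℝ) = (inner ℝ α β : ℝ) - 2 * a := by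
    intro γ hγ
    have h := hanti γ hγ
    rw [hc, hc] at h
    rw [inner_sub_left, inner_sub_left, inner_smul_left] at h
    simp only [hv, inner_sub_right, inner_smul_right, inner_smul_left,
      RCLike.conj_to_real] at *
    nlinarith [real_inner_comm γ α, real_inner_comm γ β, real_inner_comm α β]
  obtain ⟨x, hx⟩ := hQ
  have hC : (inner ℝ α β : ℝ) - 2 * a = 0 := by
    have h1 := key x hx
    have h2 := key (x + x) (hadd x hx x hx)
    rw [inner_add_left, h1] at h2
    linarith
  have hzero : ∀ γ, (inner ℝ γ v : ℝ) = 0 := by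
    intro γ
    have hγ : γ ∈ Submodule.span ℝ Q := hspan ▸ Submodule.mem_top
    refine Submodule.span_induction ?_ ?_ ?_ ?_ hγ
    · intro y hy; rw [key y hy, hC]
    · simp
    · intro y z _ _ hy' hz'; rw [inner_add_left, hy', hz']; ring
    · intro t y _ hy'; rw [real_inner_smul_left, hy']; ring
  have hvv : v = 0 := by
    have := hzero v
    exact inner_self_eq_zero.mp this
  have hβ : β = ((inner ℝ α β : ℝ) / 2) • α := by
    have h2 : (2 : ℝ) • β = (inner ℝ α β : ℝ) • α := by
      have := sub_eq_zero.mp hvv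
      exact this
    have := congrArg (fun w => ((1:ℝ)/2) • w) h2
    simpa [smul_smul, div_eq_mul_inv, mul_comm] using this
  exact ⟨hβ, by linarith⟩
end
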